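/- Let 0 ≤ j ≤ t < b ≤ v be integers and let c be a p-ary t-design of block size b on {1,…,v} with coefficient μ_t. If C(b − j, t − j) ≢ 0 (mod p), then c is also a p-ary j-design, and its coefficient μ_j satisfies C(b − j, t − j)·μ_j = C(v − j, t − j)·μ_t in k (where binomial coefficients are interpreted via their images in k). -/

import Mathlib

open Finset

lemma count_between {α : Type*} [DecidableEq α] (Y X : Finset α) (hYX : Y ⊆ X)
    (n : ℕ) (hn : Y.card ≤ n) :
    (X.powerset.filter (fun T => T.card = n ∧ Y ⊆ T)).card
      = (X.card - Y.card).choose (n - Y.card) := by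
  rw [← Finset.card_sdiff_of_subset hYX, ← Finset.card_powersetCard]
  apply Finset.card_nbij' (fun T => T \ Y) (fun S => S ∪ Y)
  · intro T hT
    simp only [Finset.mem_coe, mem_filter, mem_powerset] at hT
    simp only [Finset.mem_coe, Finset.mem_powersetCard]
    exact ⟨Finset.sdiff_subset_sdiff hT.1 le_rfl,
      by rw [Finset.card_sdiff_of_subset hT.2.2, hT.2.1]⟩
  · intro S hS
    simp only [Finset.mem_coe, Finset.mem_powersetCard] at hS
    simp only [Finset.mem_coe, mem_filter, mem_powerset]
    have hSY : Disjoint S Y := Finset.disjoint_of_subset_left hS.1 Finset.sdiff_disjoint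
    refine ⟨Finset.union_subset (hS.1.trans (Finset.sdiff_subset)) hYX, ?_, Finset.subset_union_right⟩
    rw [Finset.card_union_of_disjoint hSY, hS.2]
    omega
  · intro T hT
    simp only [Finset.mem_coe, mem_filter, mem_powerset] at hT
    exact Finset.sdiff_union_of_subset hT.2.2
  · intro S hS
    simp only [Finset.mem_coe, Finset.mem_powersetCard] at hS
    have hSY : Disjoint S Y := Finset.disjoint_of_subset_left hS.1 Finset.sdiff_disjoint
    beta_reduce
    rw [Finset.union_sdiff_right]
    exact Finset.sdiff_eq_self_of_disjoint hSY

/-- Let `k` be a field of characteristic `p` and `0 ≤ j ≤ t < b ≤ v`.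
If `c` is a `p`-ary `t`-design of block size `b` on `{1,…,v}` with coefficient `μ_t` and
`C(b − j, t − j) ≢ 0 (mod p)`, then `c` is also a `p`-ary `j`-design, with coefficient
`μ_j` satisfying `C(b − j, t − j) · μ_j = C(v − j, t − j) · μ_t` in `k`. -/
theorem pary_design_coeff_relation (p : ℕ) (hp : p.Prime)
    (k : Type*) [Field k] [CharP k p]
    (v b t j : ℕ) (hjt : j ≤ t) (htb : t < b) (hbv : b ≤ v)
    (c : Finset (Fin v) → k) (μt : k)
    (hc : ∀ Y : Finset (Fin v), Y.card = t →
        ∑ X ∈ univ.filter (fun X : Finset (Fin v) => X.card = b ∧ Y ⊆ X), c X = μt)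
    (hch : ¬ p ∣ Nat.choose (b - j) (t - j)) :
    ∃ μj : k,
      (∀ Y : Finset (Fin v), Y.card = j →
          ∑ X ∈ univ.filter (fun X : Finset (Fin v) => X.card = b ∧ Y ⊆ X), c X = μj) ∧
      (Nat.choose (b - j) (t - j) : k) * μj = (Nat.choose (v - j) (t - j) : k) * μt := by
  set C1 : ℕ := (b - j).choose (t - j) with hC1def
  set C2 : ℕ := (v - j).choose (t - j) with hC2def
  have hC1 : (C1 : k) ≠ 0 := by
    rw [Ne, CharP.cast_eq_zero_iff k p]
    exact hch
  have key : ∀ Y : Finset (Fin v), Y.card = j →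
      (C1 : k) * (∑ X ∈ univ.filter (fun X : Finset (Fin v) => X.card = b ∧ Y ⊆ X), c X)
        = (C2 : k) * μt := by
    intro Y hY
    set A : Finset (Finset (Fin v)) :=
      univ.filter (fun T : Finset (Fin v) => T.card = t ∧ Y ⊆ T) with hA
    have cardA : A.card = C2 := by
      have := count_between Y (univ : Finset (Fin v)) (Finset.subset_univ Y) t (hY ▸ hjt)
      rw [Finset.powerset_univ] at this
      simpa [hA, hY, Finset.card_univ] using this
    have h1 : ∑ T ∈ A, (∑ X ∈ univ.filter (fun X : Finset (Fin v) => X.card = b ∧ T ⊆ X), c X)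
        = (C2 : k) * μt := by
      rw [Finset.sum_congr rfl (fun T hT => hc T (Finset.mem_filter.mp hT).2.1),
        Finset.sum_const, cardA, nsmul_eq_mul]
    have h2 : ∑ T ∈ A, (∑ X ∈ univ.filter (fun X : Finset (Fin v) => X.card = b ∧ T ⊆ X), c X)
        = (C1 : k) * (∑ X ∈ univ.filter (fun X : Finset (Fin v) => X.card = b ∧ Y ⊆ X), c X) := by
      calc ∑ T ∈ A, (∑ X ∈ univ.filter (fun X : Finset (Fin v) => X.card = b ∧ T ⊆ X), c X)
          = ∑ T ∈ A, ∑ X ∈ (univ : Finset (Finset (Fin v))),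
              if X.card = b ∧ T ⊆ X then c X else 0 := by
            exact Finset.sum_congr rfl fun T _ => (Finset.sum_filter _ _)
        _ = ∑ X ∈ (univ : Finset (Finset (Fin v))), ∑ T ∈ A,
              if X.card = b ∧ T ⊆ X then c X else 0 := Finset.sum_comm
        _ = ∑ X ∈ (univ : Finset (Finset (Fin v))),
              (if X.card = b ∧ Y ⊆ X then (C1 : k) * c X else 0) := by
            refine Finset.sum_congr rfl fun X _ => ?_
            rw [← Finset.sum_filter]
            by_cases hX : X.card = b ∧ Y ⊆ X
            · rw [if_pos hX, Finset.sum_const, nsmul_eq_mul]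
              congr 1
              have hfe : A.filter (fun T => X.card = b ∧ T ⊆ X)
                  = X.powerset.filter (fun T => T.card = t ∧ Y ⊆ T) := by
                ext T
                simp only [hA, Finset.mem_filter, Finset.mem_powerset, Finset.mem_univ,
                  true_and, hX.1]
                tauto
              rw [hfe, count_between Y X hX.2 t (hY ▸ hjt), hX.1, hY]
            · rw [if_neg hX]
              refine Finset.sum_eq_zero fun T hT => ?_
              obtain ⟨hTA, hXb, hTX⟩ := Finset.mem_filter.mp hT
              exact absurd ⟨hXb, ((Finset.mem_filter.mp hTA).2.2).trans hTX⟩ hX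
        _ = ∑ X ∈ univ.filter (fun X : Finset (Fin v) => X.card = b ∧ Y ⊆ X), (C1 : k) * c X :=
            (Finset.sum_filter _ _).symm
        _ = (C1 : k) * (∑ X ∈ univ.filter (fun X : Finset (Fin v) => X.card = b ∧ Y ⊆ X), c X) :=
            (Finset.mul_sum _ _ _).symm
    rw [← h2, h1]
  refine ⟨(C2 : k) * μt / (C1 : k), fun Y hY => ?_, ?_⟩
  · rw [eq_div_iff hC1, mul_comm, key Y hY]
  · rw [mul_div_assoc', mul_comm, mul_div_assoc, div_self hC1, mul_one]
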